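/- For all a, b, c > 0 one has sinh(a) · sinh(G(a,b,c)) ≥ 1, where G(a,b,c) = arcosh( (cosh c + cosh a·cosh b)/(sinh a·sinh b) ). -/

import Mathlib

open Real

/-- Inverse hyperbolic cosine: `arcosh x = log(x + √(x² − 1))`. -/
noncomputable def arcosh (x : ℝ) : ℝ := Real.log (x + Real.sqrt (x ^ 2 - 1))

/-- Length `G(a,b,c)` of the side opposite the side of length `c` in a right-angled geodesic
hexagon in the hyperbolic plane with alternating side lengths `a`, `b`, `c`. -/
noncomputable def hexG (a b c : ℝ) : ℝ :=
  _root_.arcosh ((Real.cosh c + Real.cosh a * Real.cosh b) / (Real.sinh a * Real.sinh b))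

/-- The side of length `G(a,b,c)` crosses the collar around the side of length `a`:
`sinh a · sinh G(a,b,c) ≥ 1`. -/
theorem hexagon_side_crosses_collar (a b c : ℝ) (ha : 0 < a) (hb : 0 < b) (hc : 0 < c) :
    1 ≤ Real.sinh a * Real.sinh (hexG a b c) := by
  have hsa : 0 < Real.sinh a := Real.sinh_pos_iff.2 ha
  have hsb : 0 < Real.sinh b := Real.sinh_pos_iff.2 hb
  have hD : 0 < Real.sinh a * Real.sinh b := mul_pos hsa hsb
  set x : ℝ := (Real.cosh c + Real.cosh a * Real.cosh b) / (Real.sinh a * Real.sinh b) with hx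
  have hca : Real.cosh a ^ 2 = 1 + Real.sinh a ^ 2 := by
    have := Real.cosh_sq a; linarith
  have hcb : Real.cosh b ^ 2 = 1 + Real.sinh b ^ 2 := by
    have := Real.cosh_sq b; linarith
  have hcc : 1 ≤ Real.cosh c := Real.one_le_cosh c
  have hcapos : 0 < Real.cosh a := Real.cosh_pos _
  have hcbpos : 0 < Real.cosh b := Real.cosh_pos _
  have hnum : Real.sinh a * Real.sinh b + 1 ≤ Real.cosh c + Real.cosh a * Real.cosh b := by
    nlinarith [sq_nonneg (Real.sinh a - Real.sinh b), mul_pos hcapos hcbpos, mul_pos hsa hsb]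
  have hx1 : 1 ≤ x := by
    rw [hx, le_div_iff₀ hD]; linarith
  have ht : Real.sqrt (x ^ 2 - 1) ^ 2 = x ^ 2 - 1 :=
    Real.sq_sqrt (by nlinarith)
  have htn : 0 ≤ Real.sqrt (x ^ 2 - 1) := Real.sqrt_nonneg _
  have hpos : 0 < x + Real.sqrt (x ^ 2 - 1) := by linarith
  have hsinh : Real.sinh (hexG a b c) = Real.sqrt (x ^ 2 - 1) := by
    rw [hexG, _root_.arcosh, ← hx, Real.sinh_eq, Real.exp_log hpos, Real.exp_neg, Real.exp_log hpos]
    field_simp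
    nlinarith [ht]
  rw [hsinh]
  -- key: (sinh a)^2 * (x^2 - 1) ≥ 1
  have hkey : 1 ≤ Real.sinh a ^ 2 * (x ^ 2 - 1) := by
    have h1 : Real.sinh b ^ 2 ≤ (Real.cosh c + Real.cosh a * Real.cosh b) ^ 2 -
        (Real.sinh a * Real.sinh b) ^ 2 := by
      nlinarith [mul_pos hcapos hcbpos, sq_nonneg (Real.sinh a), mul_pos hsa hsb]
    have h2 : Real.sinh a ^ 2 * (x ^ 2 - 1) =
        ((Real.cosh c + Real.cosh a * Real.cosh b) ^ 2 - (Real.sinh a * Real.sinh b) ^ 2) /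
        Real.sinh b ^ 2 := by
      rw [hx]; field_simp
    rw [h2, le_div_iff₀ (by positivity : (0:ℝ) < Real.sinh b ^ 2)]
    linarith
  nlinarith [mul_nonneg hsa.le htn, sq_nonneg (Real.sinh a * Real.sqrt (x ^ 2 - 1) - 1)]
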